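/- Let P be a monic polynomial of degree n over ℂ. For each j with 0 ≤ j ≤ n − 1, the power sum ∑ y^j over the n roots y (with multiplicity) of P(Y) − P(z) = 0 is a constant independent of z. -/

import Mathlib

open Finset Polynomial

private lemma exists_enum (s : Multiset ℂ) :
    ∃ (m : ℕ) (f : Fin m → ℂ), Finset.univ.val.map f = s := by
  refine ⟨s.toList.length, s.toList.get, ?_⟩
  have h1 : (Finset.univ.val.map s.toList.get) = ((List.ofFn s.toList.get : List ℂ) : Multiset ℂ) := by
    simp
  rw [h1, List.ofFn_get, Multiset.coe_toList]

private lemma newton_multiset (s : Multiset ℂ) (k : ℕ) (hk : 0 < k) :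
    (s.map (· ^ k)).sum = (-1) ^ (k + 1) * k * s.esymm k -
      ∑ a ∈ Finset.HasAntidiagonal.antidiagonal k with a.1 ∈ Set.Ioo 0 k,
        (-1) ^ a.1 * s.esymm a.1 * (s.map (· ^ a.2)).sum := by
  obtain ⟨m, f, rfl⟩ := exists_enum s
  have key := congrArg (MvPolynomial.aeval f) (MvPolynomial.psum_eq_mul_esymm_sub_sum (Fin m) ℂ k hk)
  have hpsum : ∀ i : ℕ, MvPolynomial.aeval f (MvPolynomial.psum (Fin m) ℂ i)
      = ((Finset.univ.val.map f).map (· ^ i)).sum := by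
    intro i
    rw [Multiset.map_map]
    simp only [MvPolynomial.psum, map_sum, map_pow, MvPolynomial.aeval_X]
    rfl
  have hesymm : ∀ i : ℕ, MvPolynomial.aeval f (MvPolynomial.esymm (Fin m) ℂ i)
      = (Finset.univ.val.map f).esymm i :=
    fun i => MvPolynomial.aeval_esymm_eq_multiset_esymm (Fin m) ℂ i f
  rw [hpsum] at key
  rw [key]
  rw [map_sub, map_mul, map_mul, map_pow, map_neg, map_one, map_natCast, hesymm, map_sum]
  congr 1
  refine Finset.sum_congr rfl fun a _ => ?_
  rw [map_mul, map_mul, map_pow, map_neg, map_one, hesymm, hpsum]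

private lemma psum_eq_of_esymm_eq (s t : Multiset ℂ) (hcard : Multiset.card s = Multiset.card t)
    (k : ℕ) (h : ∀ i, 0 < i → i ≤ k → s.esymm i = t.esymm i) :
    ∀ m, m ≤ k → (s.map (· ^ m)).sum = (t.map (· ^ m)).sum := by
  intro m
  induction m using Nat.strong_induction_on with
  | _ m ih =>
    intro hm
    rcases Nat.eq_zero_or_pos m with rfl | hpos
    · simp [hcard]
    · rw [newton_multiset s m hpos, newton_multiset t m hpos,
        h m hpos hm]
      congr 1
      refine Finset.sum_congr rfl fun a ha => ?_
      simp only [Finset.mem_filter, Finset.HasAntidiagonal.mem_antidiagonal, Set.mem_Ioo] at ha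
      rw [h a.1 ha.2.1 (le_trans (le_of_lt ha.2.2) hm),
        ih a.2 (by omega) (by omega)]

private lemma roots_card (P : Polynomial ℂ) (hP : P.Monic) (n : ℕ) (hn : P.natDegree = n)
    (hn1 : 1 ≤ n) (a : ℂ) :
    Multiset.card (P - Polynomial.C a).roots = n ∧ (P - Polynomial.C a).natDegree = n
      ∧ (P - Polynomial.C a).leadingCoeff = 1 := by
  have hdeg : (P - Polynomial.C a).natDegree = n := by rw [natDegree_sub_C, hn]
  have hlc : (P - Polynomial.C a).leadingCoeff = 1 := by
    rw [leadingCoeff, hdeg, coeff_sub, coeff_C, if_neg (by omega)]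
    have := hP.coeff_natDegree
    rw [hn] at this
    rw [this, sub_zero]
  have hne : (P - Polynomial.C a) ≠ 0 := by
    intro h0
    rw [h0] at hdeg; simp at hdeg; omega
  refine ⟨?_, hdeg, hlc⟩
  have := (Polynomial.splits_iff_card_roots (f := P - Polynomial.C a)).mp
    (IsAlgClosed.splits _)
  rw [this, hdeg]

private lemma esymm_roots (P : Polynomial ℂ) (hP : P.Monic) (n : ℕ) (hn : P.natDegree = n)
    (hn1 : 1 ≤ n) (a : ℂ) (i : ℕ) (hi : i < n) :
    (P - Polynomial.C a).roots.esymm i = (-1) ^ i * P.coeff (n - i) := by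
  obtain ⟨hcard, hdeg, hlc⟩ := roots_card P hP n hn hn1 a
  have h1 : n - i ≤ (P - Polynomial.C a).natDegree := by omega
  have := Polynomial.coeff_eq_esymm_roots_of_card (by rw [hcard, hdeg]) h1
  rw [hlc, hdeg, one_mul, Nat.sub_sub_self hi.le] at this
  have hco : (P - Polynomial.C a).coeff (n - i) = P.coeff (n - i) := by
    rw [coeff_sub, coeff_C, if_neg (by omega), sub_zero]
  rw [hco] at this
  rw [this, ← mul_assoc, ← mul_pow]
  simp

theorem stmt_6 (P : Polynomial ℂ) (hP : P.Monic) (n : ℕ) (hn : P.natDegree = n)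
    (hn1 : 1 ≤ n) (j : ℕ) (hj : j < n) :
    ∃ c : ℂ, ∀ z : ℂ,
      (((P - Polynomial.C (P.eval z)).roots).map (fun y => y ^ j)).sum = c := by
  refine ⟨(((P - Polynomial.C (P.eval 0)).roots).map (fun y => y ^ j)).sum, fun z => ?_⟩
  refine psum_eq_of_esymm_eq _ _ ?_ j ?_ j le_rfl
  · rw [(roots_card P hP n hn hn1 _).1, (roots_card P hP n hn hn1 _).1]
  · intro i hi0 hij
    rw [esymm_roots P hP n hn hn1 _ i (by omega), esymm_roots P hP n hn hn1 _ i (by omega)]
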